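/- arXiv:2601.18657 — 3 statements merged into one kernel-verified Lean document; each statement's English description precedes it below -/
import Mathlib

section
/- For integers k ≥ 2 and n > k-1, D_k(n) + D_{k-1}(n) = D_{k-1}(n-k+1) + 2·A(n), where D_j(m) counts partitions of m into non-negative parts whose smallest part occurs exactly j times with all other parts distinct, and A(m) counts partitions of m into distinct positive parts. -/
/-- `Dcount j m` is the number of partitions of `m` into non-negative parts
(multisets of natural numbers, `0` allowed, summing to `m`) whose smallest part
occurs exactly `j` times with all other parts occurring exactly once.
(With this definition `Dcount j 0 = 1`, realized by `j` copies of `0`.) -/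
noncomputable def Dcount (j m : ℕ) : ℕ :=
  Set.ncard {M : Multiset ℕ | M.sum = m ∧
    ∃ s ∈ M, (∀ x ∈ M, s ≤ x) ∧ M.count s = j ∧
      ∀ x ∈ M, x ≠ s → M.count x = 1}

namespace DAux

/-- The defining predicate. -/
def DPred (j : ℕ) (M : Multiset ℕ) : Prop :=
  ∃ s ∈ M, (∀ x ∈ M, s ≤ x) ∧ M.count s = j ∧ ∀ x ∈ M, x ≠ s → M.count x = 1

def SSet (j m : ℕ) : Set (Multiset ℕ) := {M | M.sum = m ∧ DPred j M}

lemma Dcount_eq (j m : ℕ) : Dcount j m = (SSet j m).ncard := rfl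

lemma SSet_finite (j m : ℕ) : (SSet j m).Finite := by
  apply (Set.finite_Iic ((max j 1) • (Multiset.range (m + 1)))).subset
  rintro M ⟨hsum, s, hsM, hmin, hcs, hone⟩
  rw [Set.mem_Iic, Multiset.le_iff_count]
  intro a
  rw [Multiset.count_nsmul]
  by_cases ha : a ∈ M
  · have ha1 : a < m + 1 := by
      have := Multiset.single_le_sum (fun x _ => Nat.zero_le x) a ha
      omega
    have hr : (Multiset.range (m + 1)).count a = 1 :=
      Multiset.count_eq_one_of_mem (Multiset.nodup_range _) (Multiset.mem_range.mpr ha1)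
    rw [hr, mul_one]
    by_cases has : a = s
    · subst has; rw [hcs]; exact le_max_left _ _
    · rw [hone a ha has]; exact le_max_right _ _
  · simp [Multiset.count_eq_zero_of_notMem ha]

def ZSet (j m : ℕ) : Set (Multiset ℕ) := {M ∈ SSet j m | (0:ℕ) ∈ M}
def PSet (j m : ℕ) : Set (Multiset ℕ) := {M ∈ SSet j m | (0:ℕ) ∉ M}

lemma ZSet_finite (j m : ℕ) : (ZSet j m).Finite :=
  (SSet_finite j m).subset (fun _ h => h.1)
lemma PSet_finite (j m : ℕ) : (PSet j m).Finite :=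
  (SSet_finite j m).subset (fun _ h => h.1)

lemma ncard_SSet_split (j m : ℕ) :
    (SSet j m).ncard = (ZSet j m).ncard + (PSet j m).ncard := by
  rw [← Set.ncard_union_eq (by
      rw [Set.disjoint_iff_forall_ne]
      rintro M hM N hN rfl
      exact hN.2 hM.2) (ZSet_finite j m) (PSet_finite j m)]
  congr 1
  ext M
  by_cases h : (0:ℕ) ∈ M <;> simp [ZSet, PSet, h]

def DistSet (m : ℕ) : Set (Multiset ℕ) := {N | N.sum = m ∧ N.Nodup ∧ (0:ℕ) ∉ N}

lemma DistSet_finite (m : ℕ) : (DistSet m).Finite := by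
  apply (Set.finite_Iic (Multiset.range (m + 1))).subset
  rintro N ⟨hsum, hnd, h0⟩
  rw [Set.mem_Iic, Multiset.le_iff_count]
  intro a
  by_cases ha : a ∈ N
  · have ha1 : a < m + 1 := by
      have := Multiset.single_le_sum (fun x _ => Nat.zero_le x) a ha
      omega
    have hr : (Multiset.range (m + 1)).count a = 1 :=
      Multiset.count_eq_one_of_mem (Multiset.nodup_range _) (Multiset.mem_range.mpr ha1)
    rw [hr]
    exact Multiset.nodup_iff_count_le_one.mp hnd a
  · simp [Multiset.count_eq_zero_of_notMem ha]

end DAux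
namespace DAux

lemma ZSet_ncard (j m : ℕ) (hj : 1 ≤ j) : (ZSet j m).ncard = (DistSet m).ncard := by
  have hbij : Set.BijOn (Multiset.filter (· ≠ 0)) (ZSet j m) (DistSet m) := by
    refine ⟨?_, ?_, ?_⟩
    · rintro M ⟨⟨hsum, s, hsM, hmin, hcs, hone⟩, h0⟩
      have hs : s = 0 := Nat.le_zero.mp (hmin 0 h0)
      subst hs
      refine ⟨?_, ?_, ?_⟩
      · have hsplit := Multiset.filter_add_not (fun x => x ≠ 0) M
        have h2 : (Multiset.filter (fun x => ¬ x ≠ 0) M).sum = 0 := by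
          apply Multiset.sum_eq_zero
          intro x hx
          have := Multiset.of_mem_filter hx
          simpa using this
        have h3 : (Multiset.filter (fun x => x ≠ 0) M).sum
            + (Multiset.filter (fun x => ¬ x ≠ 0) M).sum = M.sum := by
          rw [← Multiset.sum_add, hsplit]
        rw [h2, hsum] at h3
        simpa using h3
      · rw [Multiset.nodup_iff_count_le_one]
        intro a
        rw [Multiset.count_filter]
        split_ifs with h
        · by_cases haM : a ∈ M
          · rw [hone a haM h]
          · simp [Multiset.count_eq_zero_of_notMem haM]
        · exact Nat.zero_le _
      · intro hmem
        exact (Multiset.of_mem_filter hmem) rfl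
    · have key : ∀ M ∈ ZSet j m, M = Multiset.filter (· ≠ 0) M + Multiset.replicate j 0 := by
        rintro M ⟨⟨hsum, s, hsM, hmin, hcs, hone⟩, h0⟩
        have hs : s = 0 := Nat.le_zero.mp (hmin 0 h0)
        subst hs
        ext a
        rw [Multiset.count_add, Multiset.count_filter, Multiset.count_replicate]
        by_cases ha : a = 0
        · subst ha; simpa using hcs
        · simp [ha]
          exact fun h => absurd h.symm ha
      intro M hM N hN h
      rw [key M hM, key N hN, h]
    · rintro N ⟨hsum, hnd, h0⟩
      refine ⟨N + Multiset.replicate j 0, ⟨⟨?_, 0, ?_, fun x _ => Nat.zero_le x, ?_, ?_⟩, ?_⟩, ?_⟩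
      · simp [hsum]
      · simp [Multiset.mem_replicate]; omega
      · rw [Multiset.count_add, Multiset.count_replicate,
          Multiset.count_eq_zero_of_notMem h0]
        simp
      · intro x hx hx0
        rw [Multiset.count_add, Multiset.count_replicate]
        have hxN : x ∈ N := by
          rcases Multiset.mem_add.mp hx with h | h
          · exact h
          · exact absurd (Multiset.eq_of_mem_replicate h) hx0
        rw [Multiset.count_eq_one_of_mem hnd hxN, if_neg (fun h : (0:ℕ) = x => hx0 h.symm)]
      · simp [Multiset.mem_replicate]; omega
      · rw [Multiset.filter_add]
        have h1 : Multiset.filter (· ≠ 0) N = N :=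
          Multiset.filter_eq_self.mpr (fun a ha => by rintro rfl; exact h0 ha)
        have h2 : Multiset.filter (· ≠ 0) (Multiset.replicate j (0:ℕ)) = 0 := by
          rw [Multiset.filter_eq_nil]
          intro a ha
          simp [Multiset.eq_of_mem_replicate ha]
        rw [h1, h2, add_zero]
  calc (ZSet j m).ncard = (Multiset.filter (· ≠ 0) '' (ZSet j m)).ncard :=
        (Set.ncard_image_of_injOn hbij.injOn).symm
    _ = (DistSet m).ncard := by rw [hbij.image_eq]

lemma mem_distincts {m : ℕ} (p : Nat.Partition m) :
    p ∈ Nat.Partition.distincts m ↔ p.parts.Nodup := by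
  simp [Nat.Partition.distincts]

lemma distincts_card (m : ℕ) :
    (Nat.Partition.distincts m).card = (DistSet m).ncard := by
  classical
  rw [← Set.ncard_coe_finset]
  have hbij : Set.BijOn (fun p : Nat.Partition m => p.parts)
      ↑(Nat.Partition.distincts m) (DistSet m) := by
    refine ⟨?_, ?_, ?_⟩
    · intro p hp
      rw [Finset.mem_coe, mem_distincts] at hp
      exact ⟨p.parts_sum, hp, fun h0 => by simpa using p.parts_pos h0⟩
    · intro p _ q _ h
      exact Nat.Partition.ext h
    · rintro N ⟨hsum, hnd, h0⟩
      refine ⟨⟨N, fun {i} hi => Nat.pos_of_ne_zero (by rintro rfl; exact h0 hi), hsum⟩, ?_, rfl⟩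
      rw [Finset.mem_coe, mem_distincts]
      exact hnd
  calc (↑(Nat.Partition.distincts m) : Set (Nat.Partition m)).ncard
      = ((fun p : Nat.Partition m => p.parts) '' ↑(Nat.Partition.distincts m)).ncard :=
        (Set.ncard_image_of_injOn hbij.injOn).symm
    _ = (DistSet m).ncard := by rw [hbij.image_eq]

end DAux
namespace DAux

noncomputable def minOf (M : Multiset ℕ) : ℕ := sInf {x | x ∈ M}

lemma minOf_eq {M : Multiset ℕ} {s : ℕ} (hs : s ∈ M) (hmin : ∀ x ∈ M, s ≤ x) :
    minOf M = s :=
  le_antisymm (Nat.sInf_le hs) (hmin _ (Nat.sInf_mem ⟨s, show s ∈ {x | x ∈ M} from hs⟩))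

lemma count_sub_add (M : Multiset ℕ) (c s t x : ℕ) :
    (M - Multiset.replicate c s + Multiset.replicate c t).count x
      = M.count x - (if x = s then c else 0) + (if x = t then c else 0) := by
  rw [Multiset.count_add, Multiset.count_sub, Multiset.count_replicate,
    Multiset.count_replicate]
  have e1 : (if s = x then c else 0) = (if x = s then c else 0) := by
    split_ifs with h1 h2 <;> omega
  have e2 : (if t = x then c else 0) = (if x = t then c else 0) := by
    split_ifs with h1 h2 <;> omega
  rw [e1, e2]

lemma sum_sub_add (M : Multiset ℕ) (c s t : ℕ) (h : c ≤ M.count s) :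
    (M - Multiset.replicate c s + Multiset.replicate c t).sum + c * s
      = M.sum + c * t := by
  have hle : Multiset.replicate c s ≤ M := Multiset.le_count_iff_replicate_le.mp h
  have h2 : (M - Multiset.replicate c s) + Multiset.replicate c s = M :=
    tsub_add_cancel_of_le hle
  have h3 := congrArg Multiset.sum h2
  rw [Multiset.sum_add, Multiset.sum_replicate, smul_eq_mul] at h3
  rw [Multiset.sum_add, Multiset.sum_replicate, smul_eq_mul]
  omega

noncomputable def fdn (c : ℕ) (M : Multiset ℕ) : Multiset ℕ :=
  M - Multiset.replicate c (minOf M) + Multiset.replicate c (minOf M - 1)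

noncomputable def fup (c : ℕ) (M : Multiset ℕ) : Multiset ℕ :=
  M - Multiset.replicate c (minOf M) + Multiset.replicate c (minOf M + 1)

end DAux
namespace DAux

lemma fdn_spec {c n j : ℕ} (hc : 1 ≤ c) (hcj : c ≤ j) (hjc : j ≤ c + 1)
    {M : Multiset ℕ} (hM : M ∈ PSet j n) :
    fdn c M ∈ SSet c (n - c) ∧ fup c (fdn c M) = M := by
  obtain ⟨⟨hsum, s, hsM, hmin, hcount, hone⟩, h0⟩ := hM
  have hs1 : 1 ≤ s := Nat.one_le_iff_ne_zero.mpr (by rintro rfl; exact h0 hsM)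
  have hmineq : minOf M = s := minOf_eq hsM hmin
  set N := fdn c M with hN
  have hcnt : ∀ x, N.count x
      = M.count x - (if x = s then c else 0) + (if x = s - 1 then c else 0) := by
    intro x
    rw [hN, fdn, hmineq]
    exact count_sub_add M c s (s - 1) x
  have hs1M : (s - 1) ∉ M := fun h => by have := hmin _ h; omega
  have hcs1M : M.count (s - 1) = 0 := Multiset.count_eq_zero_of_notMem hs1M
  have hss1 : s - 1 ≠ s := by omega
  have hNs1 : N.count (s - 1) = c := by
    rw [hcnt, hcs1M, if_neg hss1, if_pos rfl]
    omega
  have hs1N : (s - 1) ∈ N := by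
    rw [← Multiset.count_pos, hNs1]; omega
  have hmemN : ∀ x ∈ N, x ∈ M ∨ x = s - 1 := by
    intro x hx
    by_cases h : x = s - 1
    · exact Or.inr h
    · left
      have hpos : 0 < N.count x := Multiset.count_pos.mpr hx
      rw [hcnt, if_neg h] at hpos
      rw [← Multiset.count_pos]
      split_ifs at hpos <;> omega
  constructor
  · refine ⟨?_, s - 1, hs1N, ?_, hNs1, ?_⟩
    · have hrep : c ≤ M.count s := by omega
      have hsum2 := sum_sub_add M c s (s - 1) hrep
      have hNdef : N = M - Multiset.replicate c s + Multiset.replicate c (s - 1) := by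
        rw [hN, fdn, hmineq]
      rw [← hNdef] at hsum2
      have hmul : c * s = c * (s - 1) + c * 1 := by
        rw [← Nat.mul_add]
        congr 1
        omega
      omega
    · intro x hx
      rcases hmemN x hx with h | h
      · have := hmin x h; omega
      · omega
    · intro x hx hxne
      rcases hmemN x hx with h | h
      · by_cases hxs : x = s
        · subst hxs
          have hpos : 0 < N.count x := Multiset.count_pos.mpr hx
          rw [hcnt, if_pos rfl, if_neg hss1.symm, hcount] at hpos ⊢
          omega
        · rw [hcnt, if_neg hxs, if_neg hxne, hone x h hxs]
      · exact absurd h hxne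
  · have hminN : minOf N = s - 1 := by
      apply minOf_eq hs1N
      intro x hx
      rcases hmemN x hx with h | h
      · have := hmin x h; omega
      · omega
    rw [fup, hminN]
    have hs1s : s - 1 + 1 = s := by omega
    ext x
    rw [hs1s, count_sub_add]
    rw [hcnt]
    by_cases h1 : x = s <;> by_cases h2 : x = s - 1
    · omega
    · rw [if_pos h1, if_neg h2, h1, hcount]; omega
    · rw [if_neg h1, if_pos h2, h2, hcs1M]; omega
    · rw [if_neg h1, if_neg h2]; omega

end DAux
namespace DAux

lemma fup_spec {c n : ℕ} (hc : 1 ≤ c) (hcn : c ≤ n)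
    {N : Multiset ℕ} (hN : N ∈ SSet c (n - c)) :
    (fup c N ∈ PSet (c + 1) n ∨ fup c N ∈ PSet c n) ∧ fdn c (fup c N) = N := by
  obtain ⟨hsum, m, hmN, hmin, hcm, hone⟩ := hN
  have hminN : minOf N = m := minOf_eq hmN hmin
  set M := fup c N with hM
  have hMdef : M = N - Multiset.replicate c m + Multiset.replicate c (m + 1) := by
    rw [hM, fup, hminN]
  have hcnt : ∀ x, M.count x
      = N.count x - (if x = m then c else 0) + (if x = m + 1 then c else 0) := by
    intro x
    rw [hMdef]
    exact count_sub_add N c m (m + 1) x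
  have hm1 : m + 1 ≠ m := by omega
  have he : N.count (m + 1) ≤ 1 := by
    by_cases h : m + 1 ∈ N
    · rw [hone (m + 1) h hm1]
    · rw [Multiset.count_eq_zero_of_notMem h]; omega
  have hcntm1 : M.count (m + 1) = N.count (m + 1) + c := by
    rw [hcnt, if_neg hm1, if_pos rfl]; omega
  have hcntm : M.count m = 0 := by
    rw [hcnt, if_pos rfl, if_neg (by omega : m ≠ m + 1), hcm]; omega
  have hmemM : ∀ x ∈ M, x ∈ N ∨ x = m + 1 := by
    intro x hx
    by_cases h : x = m + 1
    · exact Or.inr h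
    · left
      have hpos : 0 < M.count x := Multiset.count_pos.mpr hx
      rw [hcnt, if_neg h] at hpos
      rw [← Multiset.count_pos]
      split_ifs at hpos <;> omega
  have hminM : ∀ x ∈ M, m + 1 ≤ x := by
    intro x hx
    rcases hmemM x hx with h | h
    · by_cases hxm : x = m
      · subst hxm
        have := Multiset.count_pos.mpr hx
        omega
      · have := hmin x h; omega
    · omega
  have h0M : (0:ℕ) ∉ M := fun h => by have := hminM 0 h; omega
  have hm1M : m + 1 ∈ M := by
    rw [← Multiset.count_pos, hcntm1]; omega
  have hsumM : M.sum = n := by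
    have hrep : c ≤ N.count m := le_of_eq hcm.symm
    have hsum2 := sum_sub_add N c m (m + 1) hrep
    rw [← hMdef] at hsum2
    have hmul : c * (m + 1) = c * m + c * 1 := by rw [← Nat.mul_add]
    omega
  have honeM : ∀ x ∈ M, x ≠ m + 1 → M.count x = 1 := by
    intro x hx hxne
    rcases hmemM x hx with h | h
    · have hxm : x ≠ m := by
        rintro rfl
        have := Multiset.count_pos.mpr hx
        omega
      rw [hcnt, if_neg hxm, if_neg hxne, hone x h hxm]
    · exact absurd h hxne
  constructor
  · by_cases hm1N : m + 1 ∈ N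
    · left
      refine ⟨⟨hsumM, m + 1, hm1M, hminM, ?_, honeM⟩, h0M⟩
      rw [hcntm1, hone (m + 1) hm1N hm1]
      omega
    · right
      refine ⟨⟨hsumM, m + 1, hm1M, hminM, ?_, honeM⟩, h0M⟩
      rw [hcntm1, Multiset.count_eq_zero_of_notMem hm1N]
      omega
  · have hminM' : minOf M = m + 1 := minOf_eq hm1M hminM
    have hMNdef : fdn c M = M - Multiset.replicate c (m + 1) + Multiset.replicate c m := by
      rw [fdn, hminM']
      norm_num
    rw [hMNdef]
    ext x
    rw [count_sub_add, hcnt]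
    by_cases h1 : x = m + 1 <;> by_cases h2 : x = m
    · omega
    · rw [if_pos h1, if_neg h2]; omega
    · rw [if_neg h1, if_pos h2, h2, hcm]; omega
    · rw [if_neg h1, if_neg h2]; omega

end DAux
namespace DAux

lemma PSet_disjoint (c n : ℕ) : Disjoint (PSet (c + 1) n) (PSet c n) := by
  rw [Set.disjoint_left]
  rintro M ⟨⟨_, s, hsM, hmin, hcs, _⟩, _⟩ ⟨⟨_, t, htM, htmin, hct, _⟩, _⟩
  have hst : s = t := by rw [← minOf_eq hsM hmin, ← minOf_eq htM htmin]
  rw [hst, hct] at hcs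
  omega

lemma main_bij (c n : ℕ) (hc : 1 ≤ c) (hcn : c < n) :
    (PSet (c + 1) n ∪ PSet c n).ncard = (SSet c (n - c)).ncard := by
  have hbij : Set.BijOn (fdn c) (PSet (c + 1) n ∪ PSet c n) (SSet c (n - c)) := by
    refine ⟨?_, ?_, ?_⟩
    · rintro M (hM | hM)
      · exact (fdn_spec hc (by omega) (by omega) hM).1
      · exact (fdn_spec hc (by omega) (by omega) hM).1
    · intro M hM M' hM' h
      have h1 : fup c (fdn c M) = M := by
        rcases hM with hM | hM
        · exact (fdn_spec hc (by omega) (by omega) hM).2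
        · exact (fdn_spec hc (by omega) (by omega) hM).2
      have h2 : fup c (fdn c M') = M' := by
        rcases hM' with hM' | hM'
        · exact (fdn_spec hc (by omega) (by omega) hM').2
        · exact (fdn_spec hc (by omega) (by omega) hM').2
      rw [← h1, ← h2, h]
    · intro N hN
      obtain ⟨hmem, heq⟩ := fup_spec hc (le_of_lt hcn) hN
      exact ⟨fup c N, hmem.imp id id, heq⟩
  calc (PSet (c + 1) n ∪ PSet c n).ncard
      = (fdn c '' (PSet (c + 1) n ∪ PSet c n)).ncard :=
        (Set.ncard_image_of_injOn hbij.injOn).symm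
    _ = (SSet c (n - c)).ncard := by rw [hbij.image_eq]

end DAux

/-- For `k ≥ 2` and `n > k-1`,
`D_k(n) + D_{k-1}(n) = D_{k-1}(n-k+1) + 2·A(n)`,
where `A(n)` counts partitions of `n` into distinct positive parts. -/
theorem D_add_D (k n : ℕ) (hk : 2 ≤ k) (hn : k - 1 < n) :
    Dcount k n + Dcount (k - 1) n =
      Dcount (k - 1) (n - k + 1) + 2 * (Nat.Partition.distincts n).card := by
  open DAux in
  have hc : 1 ≤ k - 1 := by omega
  have h1 : n - k + 1 = n - (k - 1) := by omega
  rw [Dcount_eq, Dcount_eq, Dcount_eq, h1]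
  rw [ncard_SSet_split k n, ncard_SSet_split (k - 1) n]
  rw [ZSet_ncard k n (by omega), ZSet_ncard (k - 1) n hc, distincts_card n]
  have hmain := main_bij (k - 1) n hc hn
  have hksucc : k - 1 + 1 = k := by omega
  rw [hksucc] at hmain
  have hdisj := PSet_disjoint (k - 1) n
  rw [hksucc] at hdisj
  rw [← hmain, Set.ncard_union_eq hdisj (PSet_finite k n) (PSet_finite (k - 1) n)]
  ring
end

section
/- For all n ≥ 4, D_3(n) = 2·A(n-3) - 2·A(n-1) + 2·A(n), where D_3(n) counts partitions of n into non-negative parts whose smallest part appears exactly three times with all other parts distinct, and A(m) counts partitions of m into distinct positive parts. -/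
open Finset

/-- Distinct partitions of `m` with all parts `> t`. -/
noncomputable def fset (t m : ℕ) : Finset (Nat.Partition m) :=
  (Nat.Partition.distincts m).filter (fun p => ∀ i ∈ p.parts, t < i)

noncomputable def fc (t m : ℕ) : ℕ := (fset t m).card

lemma mem_fset {t m : ℕ} {p : Nat.Partition m} :
    p ∈ fset t m ↔ p.parts.Nodup ∧ ∀ i ∈ p.parts, t < i := by
  simp [fset, Nat.Partition.distincts, Finset.mem_filter]

lemma part_le {m : ℕ} (p : Nat.Partition m) {a : ℕ} (ha : a ∈ p.parts) : a ≤ m := by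
  have := Multiset.single_le_sum (fun x _ => Nat.zero_le x) _ ha
  simpa [p.parts_sum] using this

lemma parts_of_zero (p : Nat.Partition 0) : p.parts = 0 := by
  rcases Multiset.empty_or_exists_mem p.parts with h | ⟨a, ha⟩
  · exact h
  · have h1 := p.parts_pos ha
    have h2 := part_le p ha
    omega

lemma fc_zero (t : ℕ) : fc t 0 = 1 := by
  have h1 : fset t 0 = Finset.univ := by
    ext p
    simp only [mem_fset, parts_of_zero p, Finset.mem_univ, iff_true]
    simp
  have h2 : (Finset.univ : Finset (Nat.Partition 0)).card = 1 := by
    refine Finset.card_eq_one.2 ⟨⟨0, by simp, by simp⟩, ?_⟩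
    ext q
    simp only [Finset.mem_univ, Finset.mem_singleton, true_iff]
    exact Nat.Partition.ext (parts_of_zero q)
  rw [fc, h1, h2]

lemma fc_small {t m : ℕ} (h1 : 1 ≤ m) (h2 : m ≤ t) : fc t m = 0 := by
  rw [fc, Finset.card_eq_zero]
  ext p
  simp only [Finset.notMem_empty, iff_false, mem_fset, not_and]
  intro _ hlt
  rcases Multiset.empty_or_exists_mem p.parts with h | ⟨a, ha⟩
  · exact absurd p.parts_sum (by simp [h]; omega)
  · have h3 := part_le p ha
    exact absurd (hlt a ha) (by omega)

lemma fc_rec {t m : ℕ} (h : t + 1 ≤ m) :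
    fc t m = fc (t+1) m + fc (t+1) (m - (t+1)) := by
  classical
  have hsplit := Finset.card_filter_add_card_filter_not
    (s := fset t m) (p := fun p => (t+1) ∈ p.parts)
  have h1 : (fset t m).filter (fun p => ¬ (t+1) ∈ p.parts) = fset (t+1) m := by
    ext p
    simp only [Finset.mem_filter, mem_fset]
    constructor
    · rintro ⟨⟨hd, hlt⟩, hni⟩
      refine ⟨hd, fun i hi => ?_⟩
      have := hlt i hi
      rcases Nat.lt_or_ge (t+1) i with h' | h'
      · exact h'
      · have hie : i = t + 1 := by omega
        subst hie
        exact absurd hi hni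
    · rintro ⟨hd, hlt⟩
      exact ⟨⟨hd, fun i hi => Nat.lt_of_succ_lt (hlt i hi)⟩,
        fun hc => absurd (hlt _ hc) (by omega)⟩
  have h2 : ((fset t m).filter (fun p => (t+1) ∈ p.parts)).card = fc (t+1) (m - (t+1)) := by
    apply Finset.card_bij (i := fun p hp =>
      (⟨p.parts.erase (t+1),
        fun {i} hi => p.parts_pos (Multiset.mem_of_mem_erase hi),
        by
          have hmem : (t+1) ∈ p.parts := (Finset.mem_filter.1 hp).2
          have hc := Multiset.cons_erase hmem
          have := p.parts_sum
          rw [← hc, Multiset.sum_cons] at this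
          omega⟩ : Nat.Partition (m - (t+1))))
    · intro p hp
      rcases Finset.mem_filter.1 hp with ⟨hp1, hmem⟩
      rcases mem_fset.1 hp1 with ⟨hd, hlt⟩
      rw [mem_fset]
      refine ⟨hd.erase _, fun i hi => ?_⟩
      have hi' := Multiset.mem_of_mem_erase hi
      have h3 := hlt i hi'
      have h4 : i ≠ t + 1 := by
        intro he
        subst he
        exact hd.notMem_erase hi
      omega
    · intro p1 hp1 p2 hp2 he
      have hm1 : (t+1) ∈ p1.parts := (Finset.mem_filter.1 hp1).2
      have hm2 : (t+1) ∈ p2.parts := (Finset.mem_filter.1 hp2).2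
      apply Nat.Partition.ext
      have he' : p1.parts.erase (t+1) = p2.parts.erase (t+1) := congrArg Nat.Partition.parts he
      rw [← Multiset.cons_erase hm1, ← Multiset.cons_erase hm2, he']
    · intro q hq
      rcases mem_fset.1 hq with ⟨hd, hlt⟩
      have hnm : (t+1) ∉ q.parts := fun hc => absurd (hlt _ hc) (by omega)
      refine ⟨⟨(t+1) ::ₘ q.parts, ?_, ?_⟩, ?_, ?_⟩
      · intro i hi
        rcases Multiset.mem_cons.1 hi with h' | h'
        · omega
        · exact q.parts_pos h'
      · rw [Multiset.sum_cons, q.parts_sum]; omega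
      · rw [Finset.mem_filter]
        constructor
        · rw [mem_fset]
          constructor
          · exact Multiset.nodup_cons.2 ⟨hnm, hd⟩
          · intro i hi
            rcases Multiset.mem_cons.1 hi with h' | h'
            · omega
            · exact Nat.lt_of_succ_lt (hlt i h')
        · exact Multiset.mem_cons_self _ _
      · apply Nat.Partition.ext
        simp [Multiset.erase_cons_head]
  rw [h1, h2] at hsplit
  unfold fc at hsplit ⊢
  omega

/-- `F t m` : number of distinct partitions of `m` into parts `> t`, as a function `ℤ → ℤ`
(zero for negative `m`). -/
noncomputable def F (t : ℕ) (m : ℤ) : ℤ := if 0 ≤ m then fc t m.toNat else 0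

lemma F_neg {t : ℕ} {m : ℤ} (h : m < 0) : F t m = 0 := by
  simp [F, not_le.2 h]

lemma F_nat (t k : ℕ) : F t (k : ℤ) = fc t k := by
  simp [F]

lemma F_small {t : ℕ} {m : ℤ} (h1 : 1 ≤ m) (h2 : m ≤ t) : F t m = 0 := by
  rw [F, if_pos (by omega)]
  rw [fc_small (by omega) (by omega)]
  rfl

lemma F_rec (t : ℕ) (m : ℤ) : F t m = F (t+1) m + F (t+1) (m - (t+1)) := by
  rcases lt_or_ge m 0 with hm | hm
  · rw [F_neg hm, F_neg hm, F_neg (by omega)]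
    ring
  · obtain ⟨k, rfl⟩ : ∃ k : ℕ, m = (k : ℤ) := ⟨m.toNat, by omega⟩
    rcases Nat.lt_or_ge k (t+1) with hk | hk
    · rcases Nat.eq_zero_or_pos k with rfl | hk1
      · rw [F_nat, F_nat, fc_zero, fc_zero, F_neg (by push_cast; omega)]
        ring
      · rw [F_nat, F_nat, fc_small hk1 (by omega), fc_small hk1 (by omega),
          F_neg (by push_cast; omega)]
        ring
    · have hcast : ((k : ℤ) - (t+1)) = ((k - (t+1) : ℕ) : ℤ) := by push_cast; omega
      rw [F_nat, F_nat, hcast, F_nat, fc_rec hk]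
      push_cast
      ring

lemma sum1 (N : ℕ) (n : ℤ) (h1 : 1 ≤ n) (h2 : n ≤ N) :
    ∑ i ∈ range N, F (i+1) (n - (i+1)) = F 0 n := by
  have key : ∀ i ∈ range N, F (i+1) (n - (i+1)) = F i n - F (i+1) n := by
    intro i _
    have := F_rec i n
    push_cast at this ⊢
    omega
  rw [Finset.sum_congr rfl key, Finset.sum_range_sub' (f := fun i => F i n)]
  rw [F_small h1 h2]
  ring

lemma sum2 (N : ℕ) (n : ℤ) (h1 : 2 ≤ n) (h2 : n ≤ N) :
    ∑ i ∈ range N, F (i+1) (n - 2*(i+1)) = 2 * F 0 (n-1) - F 0 n := by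
  have key : ∀ i ∈ range N, F (i+1) (n - 2*(i+1)) =
      F i (n - (i+1)) - F (i+1) (n - (i+1)) := by
    intro i _
    have := F_rec i (n - (i+1))
    have harg : n - (i+1) - (i+1) = n - 2*(i+1) := by push_cast; ring
    rw [harg] at this
    omega
  rw [Finset.sum_congr rfl key, Finset.sum_sub_distrib]
  rw [sum1 N n (by omega) h2]
  obtain ⟨N', rfl⟩ : ∃ N', N = N' + 1 := ⟨N - 1, by omega⟩
  rw [Finset.sum_range_succ' (f := fun i => F i (n - (i+1)))]
  have htail : ∀ i ∈ range N', F (i+1) (n - (i+1+1)) = F (i+1) ((n-1) - (i+1)) := by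
    intro i _
    congr 1
    push_cast
    ring
  push_cast
  rw [Finset.sum_congr rfl htail, sum1 N' (n-1) (by omega) (by push_cast at h2 ⊢; omega)]
  norm_num
  ring

lemma sum3 (N : ℕ) (n : ℤ) (h1 : 4 ≤ n) (h2 : n ≤ N) :
    ∑ i ∈ range N, F (i+1) (n - 3*(i+1)) = F 0 n - 2 * F 0 (n-1) + 2 * F 0 (n-3) := by
  have key : ∀ i ∈ range N, F (i+1) (n - 3*(i+1)) =
      F i (n - 2*(i+1)) - F (i+1) (n - 2*(i+1)) := by
    intro i _
    have := F_rec i (n - 2*(i+1))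
    have harg : n - 2*(i+1) - (i+1) = n - 3*(i+1) := by push_cast; ring
    rw [harg] at this
    omega
  rw [Finset.sum_congr rfl key, Finset.sum_sub_distrib]
  rw [sum2 N n (by omega) h2]
  obtain ⟨N', rfl⟩ : ∃ N', N = N' + 1 := ⟨N - 1, by omega⟩
  rw [Finset.sum_range_succ' (f := fun i => F i (n - 2*(i+1)))]
  have htail : ∀ i ∈ range N', F (i+1) (n - 2*(i+1+1)) = F (i+1) ((n-2) - 2*(i+1)) := by
    intro i _
    congr 1
    push_cast
    ring
  push_cast
  rw [Finset.sum_congr rfl htail, sum2 N' (n-2) (by omega) (by push_cast at h2 ⊢; omega)]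
  norm_num
  ring


lemma Dcount_eq (n : ℕ) :
    Dcount 3 n = ∑ k ∈ range (n/3 + 1), fc k (n - 3*k) := by
  classical
  have hrange : ∀ k : ℕ, k ∈ range (n/3 + 1) ↔ 3*k ≤ n := by
    intro k
    rw [Finset.mem_range]
    omega
  have hset : {M : Multiset ℕ | M.sum = n ∧
      ∃ s ∈ M, (∀ x ∈ M, s ≤ x) ∧ M.count s = 3 ∧
        ∀ x ∈ M, x ≠ s → M.count x = 1} =
      ↑(((range (n/3 + 1)).sigma (fun k => fset k (n - 3*k))).image
        (fun x => x.1 ::ₘ x.1 ::ₘ x.1 ::ₘ x.2.parts)) := by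
    ext M
    simp only [Set.mem_setOf_eq, Finset.coe_image, Set.mem_image, Finset.mem_coe]
    constructor
    · rintro ⟨hsum, s, hsM, hmin, hcount, hothers⟩
      have hrep : Multiset.replicate 3 s ≤ M := by
        rw [← Multiset.le_count_iff_replicate_le, hcount]
      obtain ⟨u, hu⟩ := Multiset.le_iff_exists_add.1 hrep
      have hsum3 : 3*s ≤ n := by
        have : M.sum = 3*s + u.sum := by
          rw [hu, Multiset.sum_add, Multiset.sum_replicate, smul_eq_mul]
        omega
      have hMdecomp : M = Multiset.replicate 3 s + M.filter (fun x => ¬ x = s) := by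
        have h0 := Multiset.filter_add_not (fun x => x = s) M
        rw [Multiset.filter_eq', hcount] at h0
        exact h0.symm
      have hRsum : (M.filter (fun x => ¬ x = s)).sum = n - 3*s := by
        have : M.sum = 3*s + (M.filter (fun x => ¬ x = s)).sum := by
          conv_lhs => rw [hMdecomp]
          rw [Multiset.sum_add, Multiset.sum_replicate, smul_eq_mul]
        omega
      have hRmem : ∀ x ∈ M.filter (fun x => ¬ x = s), x ∈ M ∧ ¬ x = s := by
        intro x hx
        exact ⟨(Multiset.mem_filter.1 hx).1, (Multiset.mem_filter.1 hx).2⟩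
      have hpos : ∀ {x : ℕ}, x ∈ M.filter (fun x => ¬ x = s) → 0 < x := by
        intro x hx
        rcases hRmem x hx with ⟨h1, h2⟩
        have := hmin x h1
        omega
      refine ⟨⟨s, ⟨M.filter (fun x => ¬ x = s), hpos, hRsum⟩⟩,
        Finset.mem_sigma.2 ⟨?_, ?_⟩, ?_⟩
      · exact (hrange s).2 hsum3
      · show (⟨M.filter (fun x => ¬ x = s), hpos, hRsum⟩ : Nat.Partition (n - 3*s)) ∈
          fset s (n - 3*s)
        rw [mem_fset]
        constructor
        · show (M.filter (fun x => ¬ x = s)).Nodup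
          rw [Multiset.nodup_iff_count_le_one]
          intro x
          rw [Multiset.count_filter]
          by_cases hxs : ¬ x = s
          · rw [if_pos hxs]
            by_cases hxM : x ∈ M
            · rw [hothers x hxM hxs]
            · rw [Multiset.count_eq_zero.2 hxM]
              omega
          · rw [if_neg hxs]
            omega
        · show ∀ i ∈ M.filter (fun x => ¬ x = s), s < i
          intro i hi
          rcases hRmem i hi with ⟨h1, h2⟩
          have := hmin i h1
          omega
      · show s ::ₘ s ::ₘ s ::ₘ M.filter (fun x => ¬ x = s) = M
        conv_rhs => rw [hMdecomp]
        simp [Multiset.replicate_succ, Multiset.cons_add]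
    · rintro ⟨⟨k, p⟩, hkp, rfl⟩
      rw [Finset.mem_sigma] at hkp
      dsimp only at hkp
      obtain ⟨hk, hp⟩ := hkp
      rw [hrange] at hk
      rcases mem_fset.1 hp with ⟨hd, hlt⟩
      have hknp : k ∉ p.parts := fun hc => absurd (hlt _ hc) (by omega)
      dsimp only
      constructor
      · simp only [Multiset.sum_cons, p.parts_sum]
        omega
      · refine ⟨k, Multiset.mem_cons_self _ _, ?_, ?_, ?_⟩
        · intro x hx
          simp only [Multiset.mem_cons] at hx
          rcases hx with rfl | rfl | rfl | hx
          · exact le_refl _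
          · exact le_refl _
          · exact le_refl _
          · exact Nat.le_of_lt (hlt x hx)
        · simp only [Multiset.count_cons_self]
          rw [Multiset.count_eq_zero.2 hknp]
        · intro x hx hxk
          rw [Multiset.count_cons_of_ne hxk, Multiset.count_cons_of_ne hxk,
            Multiset.count_cons_of_ne hxk]
          simp only [Multiset.mem_cons] at hx
          rcases hx with rfl | rfl | rfl | hx
          · exact absurd rfl hxk
          · exact absurd rfl hxk
          · exact absurd rfl hxk
          · exact Multiset.count_eq_one_of_mem hd hx
  have hinj : Set.InjOn (fun x : (Σ k : ℕ, Nat.Partition (n - 3*k)) =>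
      x.1 ::ₘ x.1 ::ₘ x.1 ::ₘ x.2.parts)
      ↑((range (n/3 + 1)).sigma (fun k => fset k (n - 3*k))) := by
    rintro ⟨k, p⟩ hx ⟨k', p'⟩ hy he
    have hx' := Finset.mem_sigma.1 (Finset.mem_coe.1 hx)
    have hy' := Finset.mem_sigma.1 (Finset.mem_coe.1 hy)
    dsimp only at hx' hy'
    rcases mem_fset.1 hx'.2 with ⟨hd, hlt⟩
    rcases mem_fset.1 hy'.2 with ⟨hd', hlt'⟩
    dsimp only at he
    have hkk : k = k' := by
      have h1 : k ∈ (k' ::ₘ k' ::ₘ k' ::ₘ p'.parts) := by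
        rw [← he]
        exact Multiset.mem_cons_self _ _
      have h2 : k' ∈ (k ::ₘ k ::ₘ k ::ₘ p.parts) := by
        rw [he]
        exact Multiset.mem_cons_self _ _
      simp only [Multiset.mem_cons] at h1 h2
      rcases h1 with rfl | rfl | rfl | h1
      · rfl
      · rfl
      · rfl
      · rcases h2 with rfl | rfl | rfl | h2
        · rfl
        · rfl
        · rfl
        · have ha := hlt _ h2
          have hb := hlt' _ h1
          omega
    subst hkk
    have hparts : p.parts = p'.parts := by
      have h3 := (Multiset.cons_inj_right k).1 he
      have h4 := (Multiset.cons_inj_right k).1 h3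
      exact (Multiset.cons_inj_right k).1 h4
    exact congrArg (Sigma.mk k) (Nat.Partition.ext hparts)
  rw [Dcount, hset, Set.ncard_coe_finset, Finset.card_image_of_injOn hinj,
    Finset.card_sigma]
  rfl


lemma fc0 (m : ℕ) : fc 0 m = (Nat.Partition.distincts m).card := by
  unfold fc fset
  congr 1
  apply Finset.filter_true_of_mem
  intro p _ i hi
  exact p.parts_pos hi

lemma F0_nat (m : ℕ) : F 0 (m : ℤ) = ((Nat.Partition.distincts m).card : ℤ) := by
  rw [F_nat, fc0]

/-- For `n ≥ 4`, `D_3(n) = 2·A(n-3) - 2·A(n-1) + 2·A(n)`, where `A(m)` counts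
partitions of `m` into distinct positive parts. -/
theorem D3_eq (n : ℕ) (hn : 4 ≤ n) :
    (Dcount 3 n : ℤ) =
      2 * (Nat.Partition.distincts (n - 3)).card -
        2 * (Nat.Partition.distincts (n - 1)).card +
        2 * (Nat.Partition.distincts n).card := by
  have h1 : (Dcount 3 n : ℤ) = ∑ k ∈ range (n/3 + 1), (fc k (n - 3*k) : ℤ) := by
    rw [Dcount_eq]
    push_cast
    rfl
  have hterm : ∀ k ∈ range (n/3 + 1), (fc k (n - 3*k) : ℤ) = F k ((n:ℤ) - 3*(k:ℤ)) := by
    intro k hk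
    rw [Finset.mem_range] at hk
    have h3 : 3*k ≤ n := by omega
    have hc : ((n:ℤ) - 3*(k:ℤ)) = ((n - 3*k : ℕ) : ℤ) := by push_cast; omega
    rw [hc, F_nat]
  rw [h1, Finset.sum_congr rfl hterm,
    Finset.sum_range_succ' (f := fun k => F k ((n:ℤ) - 3*(k:ℤ)))]
  have hext : ∑ i ∈ range (n/3), F (i+1) ((n:ℤ) - 3*((i:ℤ)+1)) =
      ∑ i ∈ range n, F (i+1) ((n:ℤ) - 3*((i:ℤ)+1)) := by
    apply Finset.sum_subset (Finset.range_subset_range.2 (by omega))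
    intro i hi hni
    rw [Finset.mem_range] at hi hni
    have h4 : n < 3*(i+1) := by omega
    apply F_neg
    have h5 : (n:ℤ) < 3*((i:ℤ)+1) := by exact_mod_cast h4
    omega
  have hsum3 := sum3 n (n:ℤ) (by exact_mod_cast hn) (le_refl _)
  have hc1 : ((n:ℤ) - 1) = ((n - 1 : ℕ) : ℤ) := by push_cast; omega
  have hc3 : ((n:ℤ) - 3) = ((n - 3 : ℕ) : ℤ) := by push_cast; omega
  rw [hc1, hc3, F0_nat, F0_nat, F0_nat] at hsum3
  push_cast at hsum3 ⊢
  rw [hext, hsum3, show ((n:ℤ) - 0) = (n:ℤ) by ring, F0_nat]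
  ring
end

section
/- Legendre's theorem: for every positive integer n, the number of partitions of n into an even number of distinct parts minus the number of partitions of n into an odd number of distinct parts equals (-1)^m if n = m(3m±1)/2 for some positive integer m, and equals 0 otherwise. -/
set_option linter.unusedSectionVars false
set_option linter.unusedVariables false

/-- `PE n`: the number of partitions of `n` into an even number of distinct
positive parts. -/
noncomputable def PE (n : ℕ) : ℕ :=
  Set.ncard {p : Nat.Partition n | p.parts.Nodup ∧ Even p.parts.card}

/-- `PO n`: the number of partitions of `n` into an odd number of distinct
positive parts. -/
noncomputable def PO (n : ℕ) : ℕ :=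
  Set.ncard {p : Nat.Partition n | p.parts.Nodup ∧ Odd p.parts.card}


open Finset

namespace Franklin

/-- maximum element -/
def mx (S : Finset ℕ) : ℕ := S.sup id
/-- minimum element -/
noncomputable def mn (S : Finset ℕ) : ℕ := sInf (S : Set ℕ)
/-- start of the top run -/
noncomputable def rs (S : Finset ℕ) : ℕ :=
  sInf {x | x ∈ S ∧ ∀ y ∈ Finset.Icc x (mx S), y ∈ S}

noncomputable def phi (S : Finset ℕ) : Finset ℕ :=
  if mn S + rs S ≤ mx S + 1 then
    insert (mx S + 1) ((S.erase (mn S)).erase (mx S + 1 - mn S))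
  else
    insert (mx S + 1 - rs S) (insert (rs S - 1) (S.erase (mx S)))

def pent (S : Finset ℕ) : Prop :=
  ∃ m : ℕ, 0 < m ∧ (S = Finset.Icc m (2*m - 1) ∨ S = Finset.Icc (m+1) (2*m))

variable {S : Finset ℕ}

lemma le_mx (hx : x ∈ S) : x ≤ mx S := Finset.le_sup (f := id) hx

lemma mx_mem (h : S.Nonempty) : mx S ∈ S := by
  obtain ⟨x, hx, hx2⟩ := Finset.exists_mem_eq_sup S h id
  rw [mx, hx2]; exact hx

lemma mn_mem (h : S.Nonempty) : mn S ∈ S := by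
  have : (S : Set ℕ).Nonempty := by exact_mod_cast h
  exact_mod_cast Nat.sInf_mem this

lemma mn_le (hx : x ∈ S) : mn S ≤ x := Nat.sInf_le (by exact_mod_cast hx)

lemma rs_spec (h : S.Nonempty) : rs S ∈ S ∧ ∀ y ∈ Finset.Icc (rs S) (mx S), y ∈ S := by
  have : mx S ∈ {x | x ∈ S ∧ ∀ y ∈ Finset.Icc x (mx S), y ∈ S} := by
    refine ⟨mx_mem h, fun y hy => ?_⟩
    rw [Finset.mem_Icc] at hy
    have := le_antisymm hy.2 hy.1
    rw [this]; exact mx_mem h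
  exact Nat.sInf_mem ⟨_, this⟩

lemma rs_mem (h : S.Nonempty) : rs S ∈ S := (rs_spec h).1

lemma rs_run (h : S.Nonempty) (hy : rs S ≤ y) (hy2 : y ≤ mx S) : y ∈ S :=
  (rs_spec h).2 y (Finset.mem_Icc.mpr ⟨hy, hy2⟩)

lemma rs_le (hx : x ∈ S) (hrun : ∀ y ∈ Finset.Icc x (mx S), y ∈ S) : rs S ≤ x :=
  Nat.sInf_le ⟨hx, hrun⟩

lemma mn_pos (h : S.Nonempty) (h0 : 0 ∉ S) : 0 < mn S :=
  Nat.pos_of_ne_zero (fun hc => h0 (hc ▸ mn_mem h))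

lemma mn_le_rs (h : S.Nonempty) : mn S ≤ rs S := mn_le (rs_mem h)

lemma rs_le_mx (h : S.Nonempty) : rs S ≤ mx S := le_mx (rs_mem h)

lemma pred_rs_notMem (h : S.Nonempty) (h0 : 0 ∉ S) : rs S - 1 ∉ S := by
  intro hc
  have h1 : 0 < rs S := lt_of_lt_of_le (mn_pos h h0) (mn_le_rs h)
  have : rs S ≤ rs S - 1 := by
    refine rs_le hc (fun y hy => ?_)
    rw [Finset.mem_Icc] at hy
    rcases eq_or_lt_of_le hy.1 with h2 | h2
    · rwa [← h2]
    · exact rs_run h (by omega) hy.2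
  omega

lemma mx_Icc (a b : ℕ) (hab : a ≤ b) : mx (Finset.Icc a b) = b := by
  apply le_antisymm
  · exact Finset.sup_le (fun x hx => (Finset.mem_Icc.mp hx).2)
  · exact le_mx (Finset.mem_Icc.mpr ⟨hab, le_rfl⟩)

lemma mn_Icc (a b : ℕ) (hab : a ≤ b) : mn (Finset.Icc a b) = a := by
  apply le_antisymm
  · exact mn_le (Finset.mem_Icc.mpr ⟨le_rfl, hab⟩)
  · refine le_csInf ⟨a, ?_⟩ (fun x hx => (Finset.mem_Icc.mp (by exact_mod_cast hx)).1)
    exact_mod_cast Finset.mem_Icc.mpr ⟨le_rfl, hab⟩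

lemma rs_Icc (a b : ℕ) (hab : a ≤ b) : rs (Finset.Icc a b) = a := by
  have hne : (Finset.Icc a b).Nonempty := ⟨a, Finset.mem_Icc.mpr ⟨le_rfl, hab⟩⟩
  apply le_antisymm
  · refine rs_le (Finset.mem_Icc.mpr ⟨le_rfl, hab⟩) (fun y hy => ?_)
    rw [Finset.mem_Icc] at hy ⊢
    exact ⟨hy.1, hy.2.trans_eq (mx_Icc a b hab)⟩
  · have := mn_le_rs hne
    rwa [mn_Icc a b hab] at this

lemma pent_struct (h : pent S) :
    S.Nonempty ∧ 0 ∉ S ∧ mn S = rs S ∧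
      (2 * mn S = mx S + 1 ∨ 2 * mn S = mx S + 2) := by
  obtain ⟨m, hm, hS | hS⟩ := h
  · have hab : m ≤ 2*m - 1 := by omega
    subst hS
    refine ⟨⟨m, Finset.mem_Icc.mpr ⟨le_rfl, hab⟩⟩, ?_, ?_, ?_⟩
    · simp only [Finset.mem_Icc]; omega
    · rw [mn_Icc _ _ hab, rs_Icc _ _ hab]
    · rw [mn_Icc _ _ hab, mx_Icc _ _ hab]; omega
  · have hab : m + 1 ≤ 2*m := by omega
    subst hS
    refine ⟨⟨m+1, Finset.mem_Icc.mpr ⟨le_rfl, hab⟩⟩, ?_, ?_, ?_⟩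
    · simp only [Finset.mem_Icc]; omega
    · rw [mn_Icc _ _ hab, rs_Icc _ _ hab]
    · rw [mn_Icc _ _ hab, mx_Icc _ _ hab]; omega


section CaseA

variable (hne : S.Nonempty) (h0 : 0 ∉ S)
  (hA : mn S + rs S ≤ mx S + 1) (hex : mx S + 1 ≠ 2 * mn S)

include hne h0 hA hex

lemma A_lt : 2 * mn S ≤ mx S := by
  have := mn_le_rs hne; omega

lemma A_w_mem : mx S + 1 - mn S ∈ S := by
  have h1 := mn_pos hne h0
  have h2 := A_lt hne h0 hA hex
  exact rs_run hne (by omega) (by omega)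

lemma A_top_notMem : mx S + 1 ∉ S := fun hc => by have := le_mx hc; omega

lemma A_phi_eq : phi S = insert (mx S + 1) ((S.erase (mn S)).erase (mx S + 1 - mn S)) := by
  rw [phi, if_pos hA]

lemma A_mem_phi {x : ℕ} : x ∈ phi S ↔
    (x = mx S + 1 ∨ (x ∈ S ∧ x ≠ mn S ∧ x ≠ mx S + 1 - mn S)) := by
  rw [A_phi_eq hne h0 hA hex]
  simp only [Finset.mem_insert, Finset.mem_erase]
  tauto

lemma A_card : (phi S).card + 1 = S.card := by
  have h1 := mn_pos hne h0
  have h2 := A_lt hne h0 hA hex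
  have hwm := A_w_mem hne h0 hA hex
  have hsw : mn S ≠ mx S + 1 - mn S := by omega
  rw [A_phi_eq hne h0 hA hex, Finset.card_insert_of_notMem (fun hc => by
    have := (Finset.mem_erase.mp hc).2
    exact A_top_notMem hne h0 hA hex (Finset.mem_erase.mp this).2),
    Finset.card_erase_of_mem (Finset.mem_erase.mpr ⟨(hsw ∘ Eq.symm), hwm⟩),
    Finset.card_erase_of_mem (mn_mem hne)]
  have : 2 ≤ S.card := by
    refine Finset.one_lt_card.mpr ⟨mn S, mn_mem hne, mx S + 1 - mn S, hwm, hsw⟩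
  omega

lemma A_sum : (phi S).sum id = S.sum id := by
  have h1 := mn_pos hne h0
  have h2 := A_lt hne h0 hA hex
  have hwm := A_w_mem hne h0 hA hex
  have hsw : mn S ≠ mx S + 1 - mn S := by omega
  rw [A_phi_eq hne h0 hA hex, Finset.sum_insert (fun hc => by
    have := (Finset.mem_erase.mp hc).2
    exact A_top_notMem hne h0 hA hex (Finset.mem_erase.mp this).2)]
  have e1 := Finset.add_sum_erase S id (mn_mem hne)
  have e2 := Finset.add_sum_erase (S.erase (mn S)) id
    (Finset.mem_erase.mpr ⟨(hsw ∘ Eq.symm), hwm⟩)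
  simp only [id_eq] at *
  omega

lemma A_zero : 0 ∉ phi S := by
  rw [A_mem_phi hne h0 hA hex]
  push_neg
  exact ⟨by omega, fun hc => absurd hc h0⟩

lemma A_mx : mx (phi S) = mx S + 1 := by
  apply le_antisymm
  · refine Finset.sup_le (fun x hx => ?_)
    rw [A_mem_phi hne h0 hA hex] at hx
    simp only [id_eq]
    rcases hx with h | h
    · omega
    · have := le_mx h.1; omega
  · exact le_mx ((A_mem_phi hne h0 hA hex).mpr (Or.inl rfl))

lemma A_mn : mn S + 1 ≤ mn (phi S) := by
  have hm : mn (phi S) ∈ phi S := mn_mem ⟨_, (A_mem_phi hne h0 hA hex).mpr (Or.inl rfl)⟩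
  rw [A_mem_phi hne h0 hA hex] at hm
  have h2 := A_lt hne h0 hA hex
  rcases hm with h | h
  · omega
  · have := mn_le h.1
    have := h.2.1
    omega

lemma A_rs : rs (phi S) = mx S + 2 - mn S := by
  have h1 := mn_pos hne h0
  have h2 := A_lt hne h0 hA hex
  have hphine : (phi S).Nonempty := ⟨_, (A_mem_phi hne h0 hA hex).mpr (Or.inl rfl)⟩
  apply le_antisymm
  · refine rs_le ?_ (fun y hy => ?_)
    · rw [A_mem_phi hne h0 hA hex]
      rcases eq_or_ne (mn S) 1 with h1' | h1'
      · left; omega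
      · right
        refine ⟨rs_run hne (by omega) (by omega), by omega, by omega⟩
    · rw [Finset.mem_Icc, A_mx hne h0 hA hex] at hy
      rw [A_mem_phi hne h0 hA hex]
      rcases Nat.lt_or_ge y (mx S + 1) with h | h
      · right
        exact ⟨rs_run hne (by omega) (by omega), by omega, by omega⟩
      · left; omega
  · by_contra hc
    push_neg at hc
    have hw : mx S + 1 - mn S ∈ phi S := by
      refine rs_run hphine (by omega) ?_
      rw [A_mx hne h0 hA hex]; omega
    rw [A_mem_phi hne h0 hA hex] at hw
    rcases hw with h | h
    · omega
    · exact h.2.2 rfl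

lemma A_condB : mx (phi S) + 2 ≤ mn (phi S) + rs (phi S) := by
  have := A_mn hne h0 hA hex
  have := A_rs hne h0 hA hex
  have := A_mx hne h0 hA hex
  have := A_lt hne h0 hA hex
  omega

lemma A_phi_phi : phi (phi S) = S := by
  have h1 := mn_pos hne h0
  have h2 := A_lt hne h0 hA hex
  have hB := A_condB hne h0 hA hex
  rw [phi, if_neg (by omega), A_mx hne h0 hA hex, A_rs hne h0 hA hex]
  have e1 : mx S + 1 + 1 - (mx S + 2 - mn S) = mn S := by omega
  have e2 : mx S + 2 - mn S - 1 = mx S + 1 - mn S := by omega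
  rw [e1, e2]
  ext x
  simp only [Finset.mem_insert, Finset.mem_erase, A_mem_phi hne h0 hA hex]
  constructor
  · rintro (rfl | rfl | ⟨hx1, (h | hx2)⟩)
    · exact mn_mem hne
    · exact A_w_mem hne h0 hA hex
    · omega
    · exact hx2.1
  · intro hx
    rcases eq_or_ne x (mn S) with rfl | hx1
    · left; rfl
    rcases eq_or_ne x (mx S + 1 - mn S) with rfl | hx2
    · right; left; rfl
    · right; right
      have := le_mx hx
      exact ⟨by omega, Or.inr ⟨hx, hx1, hx2⟩⟩

lemma A_nonpent : ¬ pent (phi S) := by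
  intro hp
  obtain ⟨_, _, hmr, hor⟩ := pent_struct hp
  have := A_mn hne h0 hA hex
  have := A_rs hne h0 hA hex
  have := A_mx hne h0 hA hex
  have := A_lt hne h0 hA hex
  omega

end CaseA

lemma mx_pos (hne : S.Nonempty) (h0 : 0 ∉ S) : 0 < mx S :=
  lt_of_lt_of_le (mn_pos hne h0) (le_mx (mn_mem hne))

section CaseB

variable (hne : S.Nonempty) (h0 : 0 ∉ S)
  (hB : mx S + 2 ≤ mn S + rs S) (hex : mx S + 2 ≠ 2 * rs S)

include hne h0 hB hex

lemma B_lt : mx S + 3 ≤ 2 * rs S := by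
  have := mn_le_rs hne; omega

lemma B_rs2 : 2 ≤ rs S := by
  have := B_lt hne h0 hB hex
  have := mx_pos hne h0
  omega

lemma B_sig_lt_mn : mx S + 1 - rs S < mn S := by
  have := rs_le_mx hne; omega

lemma B_sig_notMem : mx S + 1 - rs S ∉ S :=
  fun hc => absurd (mn_le hc) (by have := B_sig_lt_mn hne h0 hB hex; omega)

lemma B_phi_eq : phi S = insert (mx S + 1 - rs S) (insert (rs S - 1) (S.erase (mx S))) := by
  rw [phi, if_neg (by omega)]

lemma B_mem_phi {x : ℕ} : x ∈ phi S ↔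
    (x = mx S + 1 - rs S ∨ x = rs S - 1 ∨ (x ∈ S ∧ x ≠ mx S)) := by
  rw [B_phi_eq hne h0 hB hex]
  simp only [Finset.mem_insert, Finset.mem_erase]
  tauto

lemma B_card : (phi S).card = S.card + 1 := by
  have h1 := B_lt hne h0 hB hex
  have h2 := B_rs2 hne h0 hB hex
  have h3 := rs_le_mx hne
  have hd : rs S - 1 ∉ S.erase (mx S) := fun hc =>
    pred_rs_notMem hne h0 (Finset.mem_erase.mp hc).2
  have hs : mx S + 1 - rs S ∉ insert (rs S - 1) (S.erase (mx S)) := by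
    intro hc
    rw [Finset.mem_insert] at hc
    rcases hc with hc | hc
    · omega
    · exact B_sig_notMem hne h0 hB hex (Finset.mem_erase.mp hc).2
  rw [B_phi_eq hne h0 hB hex, Finset.card_insert_of_notMem hs,
    Finset.card_insert_of_notMem hd, Finset.card_erase_of_mem (mx_mem hne)]
  have : 1 ≤ S.card := Finset.card_pos.mpr hne
  omega

lemma B_sum : (phi S).sum id = S.sum id := by
  have h1 := B_lt hne h0 hB hex
  have h2 := B_rs2 hne h0 hB hex
  have h3 := rs_le_mx hne
  have hd : rs S - 1 ∉ S.erase (mx S) := fun hc =>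
    pred_rs_notMem hne h0 (Finset.mem_erase.mp hc).2
  have hs : mx S + 1 - rs S ∉ insert (rs S - 1) (S.erase (mx S)) := by
    intro hc
    rw [Finset.mem_insert] at hc
    rcases hc with hc | hc
    · omega
    · exact B_sig_notMem hne h0 hB hex (Finset.mem_erase.mp hc).2
  rw [B_phi_eq hne h0 hB hex, Finset.sum_insert hs, Finset.sum_insert hd]
  have e1 := Finset.add_sum_erase S id (mx_mem hne)
  simp only [id_eq] at *
  omega

lemma B_zero : 0 ∉ phi S := by
  rw [B_mem_phi hne h0 hB hex]
  push_neg
  have h1 := B_lt hne h0 hB hex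
  have h2 := B_rs2 hne h0 hB hex
  have h3 := rs_le_mx hne
  exact ⟨by omega, by omega, fun hc => absurd hc h0⟩

lemma B_mx : mx (phi S) = mx S - 1 := by
  have h1 := B_lt hne h0 hB hex
  have h2 := B_rs2 hne h0 hB hex
  have h3 := rs_le_mx hne
  apply le_antisymm
  · refine Finset.sup_le (fun x hx => ?_)
    simp only [id_eq]
    rw [B_mem_phi hne h0 hB hex] at hx
    rcases hx with h | h | h
    · omega
    · omega
    · have := le_mx h.1
      have := h.2
      omega
  · apply le_mx
    rw [B_mem_phi hne h0 hB hex]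
    rcases eq_or_lt_of_le h3 with h | h
    · right; left; omega
    · right; right
      exact ⟨rs_run hne (by omega) (by omega), by omega⟩

lemma B_mn : mn (phi S) = mx S + 1 - rs S := by
  have h1 := B_lt hne h0 hB hex
  have h4 := B_sig_lt_mn hne h0 hB hex
  apply le_antisymm
  · exact mn_le ((B_mem_phi hne h0 hB hex).mpr (Or.inl rfl))
  · have hm := mn_mem (⟨_, (B_mem_phi hne h0 hB hex).mpr (Or.inl rfl)⟩ : (phi S).Nonempty)
    rw [B_mem_phi hne h0 hB hex] at hm
    rcases hm with h | h | h
    · omega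
    · omega
    · have := mn_le h.1; omega

lemma B_rs_le : rs (phi S) ≤ rs S - 1 := by
  have h1 := B_lt hne h0 hB hex
  have h2 := B_rs2 hne h0 hB hex
  have h3 := rs_le_mx hne
  refine rs_le ((B_mem_phi hne h0 hB hex).mpr (Or.inr (Or.inl rfl))) (fun y hy => ?_)
  rw [Finset.mem_Icc, B_mx hne h0 hB hex] at hy
  rw [B_mem_phi hne h0 hB hex]
  rcases eq_or_lt_of_le hy.1 with h | h
  · right; left; omega
  · right; right
    exact ⟨rs_run hne (by omega) (by omega), by omega⟩

lemma B_condA : mn (phi S) + rs (phi S) ≤ mx (phi S) + 1 := by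
  have := B_mn hne h0 hB hex
  have := B_rs_le hne h0 hB hex
  have := B_mx hne h0 hB hex
  have := B_lt hne h0 hB hex
  have := B_rs2 hne h0 hB hex
  have := rs_le_mx hne
  omega

lemma B_exA : mx (phi S) + 1 ≠ 2 * mn (phi S) := by
  have := B_mn hne h0 hB hex
  have := B_mx hne h0 hB hex
  have := B_lt hne h0 hB hex
  have := rs_le_mx hne
  have := mx_pos hne h0
  omega

lemma B_phi_phi : phi (phi S) = S := by
  have h1 := B_lt hne h0 hB hex
  have h2 := B_rs2 hne h0 hB hex
  have h3 := rs_le_mx hne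
  have h4 := B_sig_lt_mn hne h0 hB hex
  have hmx1 := mx_pos hne h0
  rw [phi, if_pos (B_condA hne h0 hB hex), B_mx hne h0 hB hex, B_mn hne h0 hB hex]
  have e1 : mx S - 1 + 1 = mx S := by omega
  have e2 : mx S - (mx S + 1 - rs S) = rs S - 1 := by omega
  rw [e1, e2]
  ext x
  simp only [Finset.mem_insert, Finset.mem_erase, B_mem_phi hne h0 hB hex]
  constructor
  · rintro (rfl | ⟨hx1, hx2, (h | h | h)⟩)
    · exact mx_mem hne
    · omega
    · omega
    · exact h.1
  · intro hx
    have hxmn := mn_le hx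
    rcases eq_or_ne x (mx S) with rfl | hx1
    · left; rfl
    · right
      refine ⟨?_, by omega, Or.inr (Or.inr ⟨hx, hx1⟩)⟩
      intro hc
      rw [hc] at hx
      exact pred_rs_notMem hne h0 hx

lemma B_nonpent : ¬ pent (phi S) := by
  intro hp
  obtain ⟨_, _, hmr, hor⟩ := pent_struct hp
  have := B_mn hne h0 hB hex
  have := B_mx hne h0 hB hex
  have := B_lt hne h0 hB hex
  have := rs_le_mx hne
  have := mx_pos hne h0
  omega

end CaseB


section Glue

variable (hne : S.Nonempty) (h0 : 0 ∉ S)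

lemma full_run (hne : S.Nonempty) (hmr : mn S = rs S) : S = Finset.Icc (mn S) (mx S) := by
  ext x
  rw [Finset.mem_Icc]
  constructor
  · exact fun hx => ⟨mn_le hx, le_mx hx⟩
  · exact fun hx => rs_run hne (hmr ▸ hx.1) hx.2

include hne h0

lemma pent_of_exA (hA : mn S + rs S ≤ mx S + 1) (h : mx S + 1 = 2 * mn S) : pent S := by
  have h1 := mn_le_rs hne
  have hmr : mn S = rs S := by omega
  refine ⟨mn S, mn_pos hne h0, Or.inl ?_⟩
  convert full_run hne hmr using 2
  omega

lemma pent_of_exB (hB : mx S + 2 ≤ mn S + rs S) (h : mx S + 2 = 2 * rs S) : pent S := by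
  have h1 := mn_le_rs hne
  have h2 := rs_le_mx hne
  have hmr : mn S = rs S := by omega
  refine ⟨rs S - 1, by omega, Or.inr ?_⟩
  convert full_run hne hmr using 2 <;> omega

variable (hnp : ¬ pent S)
include hnp

lemma phi_zero : 0 ∉ phi S := by
  rcases le_or_gt (mn S + rs S) (mx S + 1) with hA | hB
  · exact A_zero hne h0 hA (fun h => hnp (pent_of_exA hne h0 hA h))
  · exact B_zero hne h0 (by omega) (fun h => hnp (pent_of_exB hne h0 (by omega) h))

lemma phi_sum : (phi S).sum id = S.sum id := by
  rcases le_or_gt (mn S + rs S) (mx S + 1) with hA | hB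
  · exact A_sum hne h0 hA (fun h => hnp (pent_of_exA hne h0 hA h))
  · exact B_sum hne h0 (by omega) (fun h => hnp (pent_of_exB hne h0 (by omega) h))

lemma phi_card : (phi S).card = S.card + 1 ∨ (phi S).card + 1 = S.card := by
  rcases le_or_gt (mn S + rs S) (mx S + 1) with hA | hB
  · exact Or.inr (A_card hne h0 hA (fun h => hnp (pent_of_exA hne h0 hA h)))
  · exact Or.inl (B_card hne h0 (by omega)
      (fun h => hnp (pent_of_exB hne h0 (by omega) h)))

lemma phi_nonpent : ¬ pent (phi S) := by
  rcases le_or_gt (mn S + rs S) (mx S + 1) with hA | hB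
  · exact A_nonpent hne h0 hA (fun h => hnp (pent_of_exA hne h0 hA h))
  · exact B_nonpent hne h0 (by omega)
      (fun h => hnp (pent_of_exB hne h0 (by omega) h))

lemma phi_phi : phi (phi S) = S := by
  rcases le_or_gt (mn S + rs S) (mx S + 1) with hA | hB
  · exact A_phi_phi hne h0 hA (fun h => hnp (pent_of_exA hne h0 hA h))
  · exact B_phi_phi hne h0 (by omega)
      (fun h => hnp (pent_of_exB hne h0 (by omega) h))

lemma phi_ne : phi S ≠ S := by
  intro h
  rcases phi_card hne h0 hnp with hc | hc <;> rw [h] at hc <;> omega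

end Glue


open scoped Classical

/-- The finset of sets of distinct positive parts summing to `n`. -/
noncomputable def F (n : ℕ) : Finset (Finset ℕ) :=
  (Finset.range (n+1)).powerset.filter (fun S => 0 ∉ S ∧ S.sum id = n)

lemma mem_F {n : ℕ} {S : Finset ℕ} : S ∈ F n ↔ 0 ∉ S ∧ S.sum id = n := by
  rw [F, Finset.mem_filter, Finset.mem_powerset]
  constructor
  · exact fun h => h.2
  · intro h
    refine ⟨fun x hx => Finset.mem_range.mpr ?_, h⟩
    have h1 : id x ≤ S.sum id := Finset.single_le_sum (fun i _ => Nat.zero_le (id i)) hx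
    rw [h.2] at h1
    simp only [id_eq] at h1
    omega

lemma F_nonempty {n : ℕ} (hn : 0 < n) {S : Finset ℕ} (hS : S ∈ F n) : S.Nonempty := by
  rcases S.eq_empty_or_nonempty with rfl | h
  · have := (mem_F.mp hS).2
    simp at this
    omega
  · exact h

lemma neg_one_pow_add_eq_zero {k l : ℕ} (h : l = k + 1 ∨ l + 1 = k) :
    (-1 : ℤ) ^ k + (-1 : ℤ) ^ l = 0 := by
  rcases h with rfl | h
  · rw [pow_succ]; ring
  · rw [← h, pow_succ]; ring

lemma sum_nonpent (n : ℕ) (hn : 0 < n) :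
    ∑ S ∈ (F n).filter (fun S => ¬ pent S), (-1 : ℤ) ^ S.card = 0 := by
  refine Finset.sum_involution (fun S _ => phi S) ?_ ?_ ?_ ?_
  · intro S hS
    have h1 := Finset.mem_filter.mp hS
    have h2 := mem_F.mp h1.1
    have hne := F_nonempty hn h1.1
    exact neg_one_pow_add_eq_zero (phi_card hne h2.1 h1.2)
  · intro S hS _
    have h1 := Finset.mem_filter.mp hS
    have h2 := mem_F.mp h1.1
    exact phi_ne (F_nonempty hn h1.1) h2.1 h1.2
  · intro S hS
    have h1 := Finset.mem_filter.mp hS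
    have h2 := mem_F.mp h1.1
    have hne := F_nonempty hn h1.1
    rw [Finset.mem_filter, mem_F]
    exact ⟨⟨phi_zero hne h2.1 h1.2, (phi_sum hne h2.1 h1.2).trans h2.2⟩,
      phi_nonpent hne h2.1 h1.2⟩
  · intro S hS
    have h1 := Finset.mem_filter.mp hS
    have h2 := mem_F.mp h1.1
    exact phi_phi (F_nonempty hn h1.1) h2.1 h1.2

lemma icc_sum (a b : ℕ) : 2 * (Finset.Icc a b).sum id = (b + 1 - a) * (a + b) := by
  induction b with
  | zero =>
    rcases Nat.eq_zero_or_pos a with rfl | ha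
    · simp
    · rw [Finset.Icc_eq_empty (by omega), show 0 + 1 - a = 0 by omega]
      simp
  | succ b ih =>
    rcases le_or_gt a (b+1) with h | h
    · rw [Finset.sum_Icc_succ_top h]
      have ih' : 2 * (((Finset.Icc a b).sum id : ℕ) : ℤ) = ((b:ℤ) + 1 - a) * (a + b) := by
        zify [h] at ih
        exact_mod_cast ih
      zify [show a ≤ b + 1 + 1 by omega]
      push_cast at ih' ⊢
      simp only [id_eq] at ih' ⊢
      push_cast
      linear_combination ih'
    · rw [Finset.Icc_eq_empty (by omega), show b + 1 + 1 - a = 0 by omega]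
      simp

lemma pent_struct' {S : Finset ℕ} (h : pent S) :
    ∃ m : ℕ, 0 < m ∧ S.card = m ∧
      (2 * S.sum id = m * (3 * m - 1) ∨ 2 * S.sum id = m * (3 * m + 1)) := by
  obtain ⟨m, hm, hS | hS⟩ := h
  · refine ⟨m, hm, ?_, Or.inl ?_⟩
    · rw [hS, Nat.card_Icc]; omega
    · rw [hS, icc_sum, show 2 * m - 1 + 1 - m = m by omega,
        show m + (2 * m - 1) = 3 * m - 1 by omega]
  · refine ⟨m, hm, ?_, Or.inr ?_⟩
    · rw [hS, Nat.card_Icc]; omega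
    · rw [hS, icc_sum, show 2 * m + 1 - (m + 1) = m by omega,
        show m + 1 + 2 * m = 3 * m + 1 by omega]

lemma intA {a b : ℤ} (ha : 1 ≤ a) (hb : 1 ≤ b)
    (h : a * (3 * a + 1) = b * (3 * b + 1)) : a = b := by
  rcases lt_trichotomy a b with hlt | he | hlt
  · have e : (b - a) * (3 * a + 3 * b + 1) = 0 := by linear_combination -h
    have p : 0 < (b - a) * (3 * a + 3 * b + 1) :=
      mul_pos (by omega) (by omega)
    rw [e] at p
    exact absurd p (lt_irrefl 0)
  · exact he
  · have e : (a - b) * (3 * a + 3 * b + 1) = 0 := by linear_combination h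
    have p : 0 < (a - b) * (3 * a + 3 * b + 1) :=
      mul_pos (by omega) (by omega)
    rw [e] at p
    exact absurd p (lt_irrefl 0)

lemma intB {a b : ℤ} (ha : 1 ≤ a) (hb : 1 ≤ b)
    (h : a * (3 * a - 1) = b * (3 * b - 1)) : a = b := by
  rcases lt_trichotomy a b with hlt | he | hlt
  · have e : (b - a) * (3 * a + 3 * b - 1) = 0 := by linear_combination -h
    have p : 0 < (b - a) * (3 * a + 3 * b - 1) :=
      mul_pos (by omega) (by omega)
    rw [e] at p
    exact absurd p (lt_irrefl 0)
  · exact he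
  · have e : (a - b) * (3 * a + 3 * b - 1) = 0 := by linear_combination h
    have p : 0 < (a - b) * (3 * a + 3 * b - 1) :=
      mul_pos (by omega) (by omega)
    rw [e] at p
    exact absurd p (lt_irrefl 0)

lemma intAB {a b : ℤ} (ha : 1 ≤ a) (hb : 1 ≤ b) :
    a * (3 * a - 1) ≠ b * (3 * b + 1) := by
  intro h
  rcases le_or_gt a b with hle | hlt
  · have e : (a + b) * (3 * (b - a) + 1) = 0 := by linear_combination -h
    have p : 0 < (a + b) * (3 * (b - a) + 1) := mul_pos (by omega) (by omega)
    rw [e] at p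
    exact absurd p (lt_irrefl 0)
  · have e : (a + b) * (3 * (a - b) - 1) = 0 := by linear_combination h
    have p : 0 < (a + b) * (3 * (a - b) - 1) := mul_pos (by omega) (by omega)
    rw [e] at p
    exact absurd p (lt_irrefl 0)

lemma pentval_injA {m m' : ℕ} (hm : 0 < m) (hm' : 0 < m')
    (h : m * (3 * m + 1) = m' * (3 * m' + 1)) : m = m' := by
  have : (m : ℤ) = m' := by
    apply intA (by exact_mod_cast hm) (by exact_mod_cast hm')
    exact_mod_cast h
  exact_mod_cast this

lemma pentval_injB {m m' : ℕ} (hm : 0 < m) (hm' : 0 < m')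
    (h : m * (3 * m - 1) = m' * (3 * m' - 1)) : m = m' := by
  have hz : (m : ℤ) * (3 * m - 1) = m' * (3 * m' - 1) := by
    zify [show 1 ≤ 3 * m by omega, show 1 ≤ 3 * m' by omega] at h
    exact_mod_cast h
  have : (m : ℤ) = m' := intB (by exact_mod_cast hm) (by exact_mod_cast hm') hz
  exact_mod_cast this

lemma pentval_ne {m m' : ℕ} (hm : 0 < m) (hm' : 0 < m') :
    m * (3 * m - 1) ≠ m' * (3 * m' + 1) := by
  intro h
  have hz : (m : ℤ) * (3 * m - 1) = m' * (3 * m' + 1) := by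
    zify [show 1 ≤ 3 * m by omega] at h
    exact_mod_cast h
  exact intAB (by exact_mod_cast hm) (by exact_mod_cast hm') hz


lemma F_split (n : ℕ) (hn : 0 < n) :
    ∑ S ∈ F n, (-1 : ℤ) ^ S.card = ∑ S ∈ (F n).filter pent, (-1 : ℤ) ^ S.card := by
  rw [← Finset.sum_filter_add_sum_filter_not (F n) pent, sum_nonpent n hn, add_zero]

lemma pent_char {T : Finset ℕ} (h : pent T) :
    ∃ m : ℕ, 0 < m ∧ T.card = m ∧
      ((T = Finset.Icc m (2*m - 1) ∧ 2 * T.sum id = m * (3 * m - 1)) ∨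
       (T = Finset.Icc (m+1) (2*m) ∧ 2 * T.sum id = m * (3 * m + 1))) := by
  obtain ⟨m, hm, hT | hT⟩ := h
  · refine ⟨m, hm, ?_, Or.inl ⟨hT, ?_⟩⟩
    · rw [hT, Nat.card_Icc]; omega
    · rw [hT, icc_sum, show 2 * m - 1 + 1 - m = m by omega,
        show m + (2 * m - 1) = 3 * m - 1 by omega]
  · refine ⟨m, hm, ?_, Or.inr ⟨hT, ?_⟩⟩
    · rw [hT, Nat.card_Icc]; omega
    · rw [hT, icc_sum, show 2 * m + 1 - (m + 1) = m by omega,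
        show m + 1 + 2 * m = 3 * m + 1 by omega]

lemma Icc_mem_F_A (n m : ℕ) (hm : 0 < m) (h : 2 * n = m * (3 * m - 1)) :
    Finset.Icc m (2*m - 1) ∈ F n := by
  rw [mem_F]
  constructor
  · rw [Finset.mem_Icc]; omega
  · have := icc_sum m (2*m - 1)
    rw [show 2 * m - 1 + 1 - m = m by omega,
      show m + (2 * m - 1) = 3 * m - 1 by omega] at this
    omega

lemma Icc_mem_F_B (n m : ℕ) (hm : 0 < m) (h : 2 * n = m * (3 * m + 1)) :
    Finset.Icc (m+1) (2*m) ∈ F n := by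
  rw [mem_F]
  constructor
  · rw [Finset.mem_Icc]; omega
  · have := icc_sum (m+1) (2*m)
    rw [show 2 * m + 1 - (m + 1) = m by omega,
      show m + 1 + 2 * m = 3 * m + 1 by omega] at this
    omega

lemma filter_pent_singleton (n m : ℕ) (hn : 0 < n) (hm : 0 < m)
    (h : 2 * n = m * (3 * m + 1) ∨ 2 * n = m * (3 * m - 1)) :
    ∃ T : Finset ℕ, (F n).filter pent = {T} ∧ T.card = m := by
  rcases h with h | h
  · refine ⟨Finset.Icc (m+1) (2*m), ?_, by rw [Nat.card_Icc]; omega⟩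
    ext T
    rw [Finset.mem_filter, Finset.mem_singleton]
    constructor
    · rintro ⟨hF, hp⟩
      have hsum := (mem_F.mp hF).2
      obtain ⟨m', hm', _, ⟨hT, hv⟩ | ⟨hT, hv⟩⟩ := pent_char hp
      · rw [hsum] at hv
        exact absurd (hv.symm.trans h) (pentval_ne hm' hm)
      · rw [hsum] at hv
        have : m' = m := pentval_injA hm' hm (hv.symm.trans h)
        rw [hT, this]
    · rintro rfl
      exact ⟨Icc_mem_F_B n m hm h, ⟨m, hm, Or.inr rfl⟩⟩
  · refine ⟨Finset.Icc m (2*m - 1), ?_, by rw [Nat.card_Icc]; omega⟩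
    ext T
    rw [Finset.mem_filter, Finset.mem_singleton]
    constructor
    · rintro ⟨hF, hp⟩
      have hsum := (mem_F.mp hF).2
      obtain ⟨m', hm', _, ⟨hT, hv⟩ | ⟨hT, hv⟩⟩ := pent_char hp
      · rw [hsum] at hv
        have : m' = m := pentval_injB hm' hm (hv.symm.trans h)
        rw [hT, this]
      · rw [hsum] at hv
        exact absurd (h.symm.trans hv) (pentval_ne hm hm')
    · rintro rfl
      exact ⟨Icc_mem_F_A n m hm h, ⟨m, hm, Or.inl rfl⟩⟩

lemma filter_pent_empty (n : ℕ)
    (h : ¬ ∃ m : ℕ, 0 < m ∧ (2 * n = m * (3 * m + 1) ∨ 2 * n = m * (3 * m - 1))) :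
    (F n).filter pent = ∅ := by
  rw [Finset.eq_empty_iff_forall_notMem]
  intro T hT
  rw [Finset.mem_filter] at hT
  have hsum := (mem_F.mp hT.1).2
  obtain ⟨m', hm', _, ⟨_, hv⟩ | ⟨_, hv⟩⟩ := pent_char hT.2
  · exact h ⟨m', hm', Or.inr (by omega)⟩
  · exact h ⟨m', hm', Or.inl (by omega)⟩

/-! ### Bridge to partitions -/

lemma card_parity_bij (n : ℕ) (Q : ℕ → Prop) :
    (Finset.univ.filter (fun p : Nat.Partition n => p.parts.Nodup ∧ Q p.parts.card)).card
      = ((F n).filter (fun S => Q S.card)).card := by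
  apply Finset.card_bij (fun p _ => p.parts.toFinset)
  · intro p hp
    rw [Finset.mem_filter] at hp ⊢
    obtain ⟨-, hnd, hQ⟩ := hp
    have he : Finset.mk p.parts hnd = p.parts.toFinset := Multiset.toFinset_eq hnd
    have hcard : p.parts.toFinset.card = p.parts.card := by
      rw [← he]; rfl
    refine ⟨mem_F.mpr ⟨?_, ?_⟩, by rwa [hcard]⟩
    · intro hc
      rw [← he] at hc
      exact absurd (p.parts_pos hc) (lt_irrefl 0)
    · rw [← he]
      show (p.parts.map id).sum = n
      rw [Multiset.map_id, p.parts_sum]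
  · intro p hp q hq hpq
    rw [Finset.mem_filter] at hp hq
    apply Nat.Partition.ext
    have := congrArg Finset.val hpq
    rwa [← Multiset.toFinset_eq hp.2.1, ← Multiset.toFinset_eq hq.2.1] at this
  · intro S hS
    rw [Finset.mem_filter] at hS
    obtain ⟨hF, hQ⟩ := hS
    obtain ⟨h0, hsum⟩ := mem_F.mp hF
    refine ⟨⟨S.val, fun {i} hi => Nat.pos_of_ne_zero (fun hc => h0 (by rwa [hc] at hi)), ?_⟩,
      ?_, ?_⟩
    · show S.val.sum = n
      rw [← hsum]
      show S.val.sum = (S.val.map id).sum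
      rw [Multiset.map_id]
    · rw [Finset.mem_filter]
      refine ⟨Finset.mem_univ _, S.nodup, ?_⟩
      show Q S.val.card
      exact hQ
    · exact Finset.val_toFinset S


lemma ncard_eq (n : ℕ) (Q : ℕ → Prop) :
    {p : Nat.Partition n | p.parts.Nodup ∧ Q p.parts.card}.ncard
      = ((F n).filter (fun S => Q S.card)).card := by
  rw [← card_parity_bij n Q, ← Set.ncard_coe_finset]
  congr 1
  ext p
  simp

lemma key_sum (n : ℕ) :
    (PE n : ℤ) - PO n = ∑ S ∈ F n, (-1 : ℤ) ^ S.card := by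
  have h3 : (F n).filter (fun S => ¬ Even S.card) = (F n).filter (fun S => Odd S.card) :=
    Finset.filter_congr (fun S _ => by simp [Nat.not_even_iff_odd])
  have h1 : ∑ S ∈ (F n).filter (fun S => Even S.card), (-1 : ℤ) ^ S.card
      = ((F n).filter (fun S => Even S.card)).card := by
    rw [Finset.sum_congr rfl (fun S hS => (Finset.mem_filter.mp hS).2.neg_one_pow)]
    simp
  have h2 : ∑ S ∈ (F n).filter (fun S => Odd S.card), (-1 : ℤ) ^ S.card
      = -(((F n).filter (fun S => Odd S.card)).card : ℤ) := by
    rw [Finset.sum_congr rfl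
      (fun S hS => Odd.neg_one_pow (Finset.mem_filter.mp hS).2)]
    simp
  have h4 : (PE n : ℤ) = ((F n).filter (fun S => Even S.card)).card := by
    rw [PE, ncard_eq n (fun k => Even k)]
    simp [Finset.filter_congr_decidable]
    congr
  have h5 : (PO n : ℤ) = ((F n).filter (fun S => Odd S.card)).card := by
    rw [PO, ncard_eq n (fun k => Odd k)]
    simp [Finset.filter_congr_decidable]
    congr
  rw [h4, h5, ← Finset.sum_filter_add_sum_filter_not (F n) (fun S => Even S.card),
    h3, h1, h2]
  ring

end Franklin

/-- Legendre's theorem: for every positive integer `n`, `PE n - PO n` equals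
`(-1)^m` if `n = m(3m±1)/2` for some positive integer `m`, and `0` otherwise. -/
theorem legendre (n : ℕ) (hn : 0 < n) :
    (∀ m : ℕ, 0 < m → (2 * n = m * (3 * m + 1) ∨ 2 * n = m * (3 * m - 1)) →
      (PE n : ℤ) - PO n = (-1 : ℤ) ^ m) ∧
    ((¬ ∃ m : ℕ, 0 < m ∧ (2 * n = m * (3 * m + 1) ∨ 2 * n = m * (3 * m - 1))) →
      PE n = PO n) := by
  constructor
  · intro m hm h
    obtain ⟨T, hT, hTc⟩ := Franklin.filter_pent_singleton n m hn hm h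
    rw [Franklin.key_sum n, Franklin.F_split n hn, hT, Finset.sum_singleton, hTc]
  · intro h
    have h0 : (PE n : ℤ) - PO n = 0 := by
      rw [Franklin.key_sum n, Franklin.F_split n hn, Franklin.filter_pent_empty n h,
        Finset.sum_empty]
    have := sub_eq_zero.mp h0
    exact_mod_cast this
end
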